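/- Let S(q) := {x ∈ ℝⁿ | Ax + q ∈ K} be the solution mapping of a linear system, where A is an m×n matrix and K ⊆ ℝᵐ is a convex polyhedron. Then for any (p̄, x̄) ∈ graph S, the classical Mordukhovich criterion D*S(p̄ | x̄)(0) = {0} holds if and only if p̄ ∈ int(dom S), and this in turn is equivalent to N_K(Ax̄ + p̄) ∩ ker Aᵀ = {0} and to T_K(Ax̄ + p̄) + range A = ℝᵐ. -/

import Mathlib

open Filter Metric Set
open scoped Topology RealInnerProductSpace

noncomputable section

abbrev Eu (n : ℕ) := EuclideanSpace ℝ (Fin n)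

section GeneralDefs

variable {E F : Type*} [NormedAddCommGroup E] [NormedSpace ℝ E]
  [NormedAddCommGroup F] [NormedSpace ℝ F]

/-- `v` is a proximal normal vector to `A` at `a`: for some `t > 0`,
`a` is a nearest point of `A` to `a + t • v`. -/
def proxNormal (A : Set E) (a : E) : Set E :=
  {v | ∃ t : ℝ, 0 < t ∧ ‖t • v‖ = Metric.infDist (a + t • v) A}

/-- the set of nearest points of `K` to `x` (metric projection). -/
def projSet (K : Set E) (x : E) : Set E :=
  {y | y ∈ K ∧ ∀ z ∈ K, ‖x - y‖ ≤ ‖x - z‖}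

/-- the contingent (tangent) cone to `X` at `x`. -/
def tangCone (X : Set E) (x : E) : Set E :=
  {w | ∃ (t : ℕ → ℝ) (v : ℕ → E), (∀ k, 0 < t k) ∧ Tendsto t atTop (𝓝 0) ∧
    Tendsto v atTop (𝓝 w) ∧ ∀ k, x + t k • v k ∈ X}

/-- `A` is locally closed at `a`. -/
def LocallyClosedAt (A : Set E) (a : E) : Prop := ∃ U ∈ 𝓝 a, IsClosed (A ∩ U)

/-- the graph of the restriction `S|_X`. -/
def svGraph (S : E → Set F) (X : Set E) : Set (E × F) := {p | p.1 ∈ X ∧ p.2 ∈ S p.1}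

/-- the Lipschitz-like property of `S` relative to `X` at `x₀` for `u₀` with constant `κ`. -/
def LipschitzLikeRel (S : E → Set F) (X : Set E) (x₀ : E) (u₀ : F) (κ : ℝ) : Prop :=
  LocallyClosedAt (svGraph S univ) (x₀, u₀) ∧
  ∃ V ∈ 𝓝 x₀, ∃ W ∈ 𝓝 u₀, ∀ x ∈ X ∩ V, ∀ x' ∈ X ∩ V, ∀ u ∈ S x' ∩ W,
    ∃ u'' ∈ S x, ‖u - u''‖ ≤ κ * ‖x' - x‖

/-- the graphical modulus of `S` relative to `X` at `x₀` for `u₀` (as an extended real,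
the infimum of all Lipschitz-like constants). -/
def gmod (S : E → Set F) (X : Set E) (x₀ : E) (u₀ : F) : EReal :=
  sInf {c : EReal | ∃ κ : ℝ, 0 ≤ κ ∧ c = (κ : EReal) ∧
    ∃ V ∈ 𝓝 x₀, ∃ W ∈ 𝓝 u₀, ∀ x ∈ X ∩ V, ∀ x' ∈ X ∩ V, ∀ u ∈ S x' ∩ W,
      ∃ u'' ∈ S x, ‖u - u''‖ ≤ κ * ‖x' - x‖}

/-- the horizon cone of `A`. -/
def horizonCone (A : Set E) : Set E :=
  {w | ∃ (a : ℕ → E) (l : ℕ → ℝ), (∀ k, a k ∈ A) ∧ (∀ k, 0 < l k) ∧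
    Tendsto l atTop (𝓝 0) ∧ Tendsto (fun k => l k • a k) atTop (𝓝 w)}

/-- extended-real absolute difference `|a - b|`. -/
def eabsdiff (a b : EReal) : EReal := max (a - b) (b - a)

/-- `f` is locally Lipschitz continuous at `x₀` relative to `X`. -/
def RelLipschitzAt (f : E → EReal) (X : Set E) (x₀ : E) : Prop :=
  ∃ κ : ℝ, 0 ≤ κ ∧ ∃ V ∈ 𝓝 x₀, ∀ x ∈ X ∩ V, ∀ y ∈ X ∩ V,
    eabsdiff (f x) (f y) ≤ ((κ * ‖x - y‖ : ℝ) : EReal)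

/-- the Lipschitz modulus of `f` at `x₀` relative to `X` (as an extended real). -/
def relLipMod (f : E → EReal) (X : Set E) (x₀ : E) : EReal :=
  sInf {c : EReal | ∃ κ : ℝ, 0 ≤ κ ∧ c = (κ : EReal) ∧ ∃ V ∈ 𝓝 x₀,
    ∀ x ∈ X ∩ V, ∀ y ∈ X ∩ V, eabsdiff (f x) (f y) ≤ ((κ * ‖x - y‖ : ℝ) : EReal)}

end GeneralDefs

section InnerDefs

variable {E F : Type*} [NormedAddCommGroup E] [InnerProductSpace ℝ E]
  [NormedAddCommGroup F] [InnerProductSpace ℝ F]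

/-- the regular (Fréchet) normal cone to `A ⊆ E × F` at `a`. -/
def regNormalP (A : Set (E × F)) (a : E × F) : Set (E × F) :=
  {v | ∀ ε : ℝ, 0 < ε → ∃ δ > 0, ∀ b ∈ A, ‖b - a‖ ≤ δ →
    ⟪v.1, b.1 - a.1⟫ + ⟪v.2, b.2 - a.2⟫ ≤ ε * ‖b - a‖}

/-- the limiting (Mordukhovich) normal cone to `A ⊆ E × F` at `a`. -/
def limNormalP (A : Set (E × F)) (a : E × F) : Set (E × F) :=
  {v | ∃ (b : ℕ → E × F) (w : ℕ → E × F), (∀ k, b k ∈ A) ∧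
    (∀ k, w k ∈ regNormalP A (b k)) ∧ Tendsto b atTop (𝓝 a) ∧ Tendsto w atTop (𝓝 v)}

/-- the limiting coderivative of `S` at `x` for `u`:
`xs ∈ coderiv S x u us ↔ (xs, -us) ∈ N_{graph S}(x, u)`. -/
def coderiv (S : E → Set F) (x : E) (u : F) (us : F) : Set E :=
  {xs | (xs, -us) ∈ limNormalP (svGraph S univ) (x, u)}

/-- the projectional coderivative of `S` at `x₀` for `u₀` with respect to `X`. -/
def projCoderiv (S : E → Set F) (X : Set E) (x₀ : E) (u₀ : F) (us : F) : Set E :=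
  {xs | ∃ (x : ℕ → E) (u : ℕ → F) (xv : ℕ → E) (uv : ℕ → F) (y : ℕ → E),
    (∀ k, (x k, u k) ∈ svGraph S X) ∧
    (∀ k, (xv k, -(uv k)) ∈ limNormalP (svGraph S X) (x k, u k)) ∧
    (∀ k, y k ∈ projSet (tangCone X (x k)) (xv k)) ∧
    Tendsto x atTop (𝓝 x₀) ∧ Tendsto u atTop (𝓝 u₀) ∧
    Tendsto uv atTop (𝓝 us) ∧ Tendsto y atTop (𝓝 xs)}

/-- the regular (Fréchet) subdifferential of an extended-real-valued function. -/
def regSubdiff (g : E → EReal) (x : E) : Set E :=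
  {v | ∀ ε : ℝ, 0 < ε → ∃ δ > 0, ∀ y, ‖y - x‖ ≤ δ →
    g x + ((⟪v, y - x⟫ - ε * ‖y - x‖ : ℝ) : EReal) ≤ g y}

/-- the limiting (Mordukhovich) subdifferential. -/
def limSubdiff (g : E → EReal) (x : E) : Set E :=
  {v | ∃ (xk vk : ℕ → E), Tendsto xk atTop (𝓝 x) ∧
    Tendsto (fun k => g (xk k)) atTop (𝓝 (g x)) ∧
    (∀ k, vk k ∈ regSubdiff g (xk k)) ∧ Tendsto vk atTop (𝓝 v)}

/-- the horizon (singular) subdifferential. -/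
def horizonSubdiff (g : E → EReal) (x : E) : Set E :=
  {v | ∃ (xk vk : ℕ → E) (lk : ℕ → ℝ), Tendsto xk atTop (𝓝 x) ∧
    Tendsto (fun k => g (xk k)) atTop (𝓝 (g x)) ∧ (∀ k, 0 < lk k) ∧
    Tendsto lk atTop (𝓝 0) ∧ (∀ k, vk k ∈ regSubdiff g (xk k)) ∧
    Tendsto (fun k => lk k • vk k) atTop (𝓝 v)}

/-- the outer limiting subdifferential of `g` at `xb` with respect to `vb`. -/
def outerSubdiffWrt (g : E → EReal) (xb vb : E) : Set E :=
  {v | ∃ (xk vk : ℕ → E), Tendsto xk atTop (𝓝 xb) ∧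
    Tendsto (fun k => g (xk k)) atTop (𝓝 (g xb)) ∧
    (∀ k, g xb + ((⟪vb, xk k - xb⟫ : ℝ) : EReal) < g (xk k)) ∧
    (∀ k, vk k ∈ limSubdiff g (xk k)) ∧ Tendsto vk atTop (𝓝 v)}

/-- `D` is a convex polyhedron (finite intersection of closed half-spaces). -/
def IsPolyhedral (D : Set E) : Prop :=
  ∃ s : Finset (E × ℝ), D = {v | ∀ p ∈ s, ⟪p.1, v⟫ ≤ p.2}

/-- the support function of `D`. -/
def supportFn (D : Set E) : E → EReal :=
  fun x => sSup ((fun v => ((⟪v, x⟫ : ℝ) : EReal)) '' D)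

end InnerDefs

namespace MCAux

variable {m : ℕ}

/-- the polyhedron determined by a finite set of half-space data. -/
def Kp (s : Finset (Eu m × ℝ)) : Set (Eu m) := {v | ∀ p ∈ s, ⟪p.1, v⟫ ≤ p.2}

/-- the linearized tangent cone. -/
def Tl (s : Finset (Eu m × ℝ)) (z : Eu m) : Set (Eu m) :=
  {w | ∀ p ∈ s, ⟪p.1, z⟫ = p.2 → ⟪p.1, w⟫ ≤ 0}

lemma convex_Kp (s : Finset (Eu m × ℝ)) : Convex ℝ (Kp s) := by
  intro v hv u hu a b ha hb hab
  intro p hp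
  have h1 := hv p hp; have h2 := hu p hp
  simp only [inner_add_right, real_inner_smul_right]
  have h3 := mul_le_mul_of_nonneg_left h1 ha
  have h4 := mul_le_mul_of_nonneg_left h2 hb
  have h5 : a * p.2 + b * p.2 = p.2 := by rw [← add_mul, hab, one_mul]
  linarith

lemma Tl_zero {s : Finset (Eu m × ℝ)} {z : Eu m} : (0 : Eu m) ∈ Tl s z := by
  intro p _ _; simp

lemma Tl_add {s : Finset (Eu m × ℝ)} {z w w' : Eu m} (hw : w ∈ Tl s z) (hw' : w' ∈ Tl s z) :
    w + w' ∈ Tl s z := by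
  intro p hp heq
  have := hw p hp heq; have := hw' p hp heq
  rw [inner_add_right]; linarith

lemma Tl_smul {s : Finset (Eu m × ℝ)} {z w : Eu m} {t : ℝ} (ht : 0 ≤ t) (hw : w ∈ Tl s z) :
    t • w ∈ Tl s z := by
  intro p hp heq
  have := hw p hp heq
  rw [real_inner_smul_right]
  exact mul_nonpos_of_nonneg_of_nonpos ht this

lemma Kp_unif (s : Finset (Eu m × ℝ)) {z : Eu m} (hz : z ∈ Kp s) :
    ∃ δ > 0, ∀ w ∈ Tl s z, ‖w‖ ≤ δ → z + w ∈ Kp s := by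
  classical
  rcases s.eq_empty_or_nonempty with rfl | hne
  · exact ⟨1, one_pos, fun w _ _ p hp => absurd hp (by simp)⟩
  set f : Eu m × ℝ → ℝ := fun p => if ⟪p.1, z⟫ < p.2 then (p.2 - ⟪p.1, z⟫) / (‖p.1‖ + 1) else 1
    with hf
  have hfpos : ∀ p ∈ s, 0 < f p := by
    intro p _
    by_cases h : ⟪p.1, z⟫ < p.2
    · simp only [hf, if_pos h]
      exact div_pos (by linarith) (by positivity)
    · simp only [hf]; rw [if_neg h]; exact one_pos
  refine ⟨min 1 (s.inf' hne f), lt_min one_pos ((Finset.lt_inf'_iff hne).mpr hfpos), ?_⟩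
  intro w hw hnorm p hp
  rcases eq_or_lt_of_le (hz p hp) with heq | hlt
  · have := hw p hp heq
    rw [inner_add_right]; linarith
  · have hfp : f p = (p.2 - ⟪p.1, z⟫) / (‖p.1‖ + 1) := if_pos hlt
    have h1 : ⟪p.1, w⟫ ≤ ‖p.1‖ * ‖w‖ := real_inner_le_norm _ _
    have h2 : ‖w‖ ≤ f p :=
      le_trans hnorm (le_trans (min_le_right _ _) (Finset.inf'_le f hp))
    have hnp : (0:ℝ) < ‖p.1‖ + 1 := by positivity
    have h3 : ‖p.1‖ * f p ≤ p.2 - ⟪p.1, z⟫ := by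
      rw [hfp, mul_comm, div_mul_eq_mul_div, div_le_iff₀ hnp]
      nlinarith [norm_nonneg p.1]
    have h4 : ⟪p.1, w⟫ ≤ p.2 - ⟪p.1, z⟫ :=
      le_trans h1 (le_trans (mul_le_mul_of_nonneg_left h2 (norm_nonneg _)) h3)
    rw [inner_add_right]; linarith

lemma tang_eq (s : Finset (Eu m × ℝ)) {z : Eu m} (hz : z ∈ Kp s) :
    tangCone (Kp s) z = Tl s z := by
  apply Subset.antisymm
  · rintro w ⟨t, v, htpos, _, hv, hmem⟩ p hp heq
    have hk : ∀ k, ⟪p.1, v k⟫ ≤ 0 := by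
      intro k
      have := hmem k p hp
      rw [inner_add_right, real_inner_smul_right, heq] at this
      nlinarith [htpos k]
    exact le_of_tendsto (tendsto_const_nhds.inner hv) (Eventually.of_forall hk)
  · intro w hw
    obtain ⟨δ, hδ, hδK⟩ := Kp_unif s hz
    set c := δ / (‖w‖ + 1) with hc
    have hcpos : 0 < c := by positivity
    have hcw : c * ‖w‖ ≤ δ := by
      rw [hc, div_mul_eq_mul_div, div_le_iff₀ (by positivity)]
      nlinarith [norm_nonneg w]
    refine ⟨fun k => c / (k + 1), fun _ => w, fun k => by positivity, ?_, tendsto_const_nhds, ?_⟩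
    · have h0 : Tendsto (fun k : ℕ => c * (1 / (k + 1))) atTop (𝓝 (c * 0)) :=
        tendsto_one_div_add_atTop_nhds_zero_nat.const_mul c
      simpa [div_eq_mul_inv] using h0
    · intro k
      have hmemT : (c / (k + 1 : ℝ)) • w ∈ Tl s z := Tl_smul (by positivity) hw
      have hle : c / (k + 1 : ℝ) ≤ c := by
        apply div_le_self hcpos.le
        have : (0:ℝ) ≤ (k:ℝ) := Nat.cast_nonneg k
        linarith
      have hn : ‖(c / (k + 1 : ℝ)) • w‖ ≤ δ := by
        rw [norm_smul, Real.norm_eq_abs, abs_of_pos (by positivity)]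
        calc c / (k + 1 : ℝ) * ‖w‖ ≤ c * ‖w‖ :=
              mul_le_mul_of_nonneg_right hle (norm_nonneg _)
          _ ≤ δ := hcw
      exact hδK _ hmemT hn

lemma reg_of_convex {E F : Type*} [NormedAddCommGroup E] [InnerProductSpace ℝ E]
    [NormedAddCommGroup F] [InnerProductSpace ℝ F] {G : Set (E × F)} (hG : Convex ℝ G)
    {a v : E × F} (ha : a ∈ G) (hv : v ∈ regNormalP G a) {c : E × F} (hc : c ∈ G) :
    ⟪v.1, c.1 - a.1⟫ + ⟪v.2, c.2 - a.2⟫ ≤ 0 := by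
  by_contra h
  push_neg at h
  set L := ⟪v.1, c.1 - a.1⟫ + ⟪v.2, c.2 - a.2⟫ with hL
  have hca : (0:ℝ) < ‖c - a‖ + 1 := by positivity
  set ε := L / (2 * (‖c - a‖ + 1)) with hε
  have hεpos : 0 < ε := by positivity
  obtain ⟨δ, hδ, hδ2⟩ := hv ε hεpos
  set t := min 1 (δ / (‖c - a‖ + 1)) with htd
  have ht0 : 0 < t := lt_min one_pos (by positivity)
  have ht1 : t ≤ 1 := min_le_left _ _
  have hb : a + t • (c - a) ∈ G := by
    have h2 := hG ha hc (by linarith : (0:ℝ) ≤ 1 - t) ht0.le (by ring)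
    have heq : (1 - t) • a + t • c = a + t • (c - a) := by module
    rwa [heq] at h2
  have hbn : ‖a + t • (c - a) - a‖ ≤ δ := by
    rw [add_sub_cancel_left, norm_smul, Real.norm_eq_abs, abs_of_pos ht0]
    calc t * ‖c - a‖ ≤ δ / (‖c - a‖ + 1) * ‖c - a‖ :=
          mul_le_mul_of_nonneg_right (min_le_right _ _) (norm_nonneg _)
      _ ≤ δ := by
          rw [div_mul_eq_mul_div, div_le_iff₀ hca]
          nlinarith [norm_nonneg (c - a)]
  have h2 := hδ2 _ hb hbn
  have hfst : (a + t • (c - a)).1 - a.1 = t • (c.1 - a.1) := by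
    simp [Prod.add_def, Prod.smul_def]
  have hsnd : (a + t • (c - a)).2 - a.2 = t • (c.2 - a.2) := by
    simp [Prod.add_def, Prod.smul_def]
  rw [hfst, hsnd, add_sub_cancel_left, real_inner_smul_right, real_inner_smul_right,
    norm_smul, Real.norm_eq_abs, abs_of_pos ht0] at h2
  have h2' : t * L ≤ ε * (t * ‖c - a‖) := by rw [hL]; ring_nf; ring_nf at h2; linarith
  have hkey : ε * (2 * (‖c - a‖ + 1)) = L := div_mul_cancel₀ _ (by positivity)
  nlinarith [mul_pos hεpos ht0, norm_nonneg (c - a), mul_nonneg (mul_nonneg hεpos.le ht0.le) (norm_nonneg (c - a))]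

lemma sum_single_eq (u : Eu m) : ∑ i, u i • EuclideanSpace.single i (1:ℝ) = u := by
  have := (EuclideanSpace.basisFun (Fin m) ℝ).toBasis.sum_repr u
  simpa [EuclideanSpace.basisFun_apply] using this

lemma abs_coord_le (u : Eu m) (i : Fin m) : |u i| ≤ ‖u‖ := by
  have := abs_real_inner_le_norm (EuclideanSpace.single i (1:ℝ)) u
  simpa [EuclideanSpace.inner_single_left] using this

end MCAux

open MCAux in
set_option maxHeartbeats 1000000 in

/-- Remark 2.3: for the solution mapping `S(q) = {x | Ax + q ∈ K}` of a
linear system with `K` a convex polyhedron, the Mordukhovich criterion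
`D*S(p̄|x̄)(0) = {0}` holds iff `p̄ ∈ int(dom S)`, iff `N_K(Ax̄+p̄) ∩ ker Aᵀ = {0}`, iff
`T_K(Ax̄+p̄) + range A = ℝᵐ`. -/
theorem mordukhovich_criterion_linear_system {n m : ℕ} (A : Eu n →L[ℝ] Eu m)
    (K : Set (Eu m)) (hK : IsPolyhedral K) (pb : Eu m) (xb : Eu n)
    (hgr : A xb + pb ∈ K) :
    (({xs : Eu m | (xs, (0 : Eu n)) ∈
        limNormalP (svGraph (fun q : Eu m => {x : Eu n | A x + q ∈ K}) univ) (pb, xb)}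
          = {0}) ↔
      pb ∈ interior {q : Eu m | ∃ x : Eu n, A x + q ∈ K}) ∧
    (pb ∈ interior {q : Eu m | ∃ x : Eu n, A x + q ∈ K} ↔
      {y : Eu m | (∀ z ∈ K, ⟪y, z - (A xb + pb)⟫ ≤ 0) ∧
        ContinuousLinearMap.adjoint A y = 0} = {0}) ∧
    ({y : Eu m | (∀ z ∈ K, ⟪y, z - (A xb + pb)⟫ ≤ 0) ∧
        ContinuousLinearMap.adjoint A y = 0} = {0} ↔
      ∀ z : Eu m, ∃ w ∈ tangCone K (A xb + pb), ∃ x : Eu n, z = w + A x) := by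
  classical
  obtain ⟨s, hs⟩ := hK
  have hsK : K = Kp s := hs
  have hzK : A xb + pb ∈ Kp s := by rw [← hsK]; exact hgr
  have hTl : tangCone K (A xb + pb) = Tl s (A xb + pb) := by
    rw [hsK]; exact tang_eq s hzK
  set Cset : Set (Eu m) := {y : Eu m | (∀ z ∈ K, ⟪y, z - (A xb + pb)⟫ ≤ 0) ∧
      ContinuousLinearMap.adjoint A y = 0} with hCset
  set G : Set (Eu m × Eu n) :=
    svGraph (fun q : Eu m => {x : Eu n | A x + q ∈ K}) univ with hGdef
  have hGmem : ∀ b : Eu m × Eu n, b ∈ G ↔ A b.2 + b.1 ∈ K := by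
    intro b; constructor
    · rintro ⟨-, h⟩; exact h
    · intro h; exact ⟨trivial, h⟩
  have hKconv : Convex ℝ K := by rw [hsK]; exact convex_Kp s
  have hGconv : Convex ℝ G := by
    intro b hb c hc a a' ha ha' haa
    rw [hGmem] at hb hc ⊢
    have h2 := hKconv hb hc ha ha' haa
    have heq : A (a • b + a' • c).2 + (a • b + a' • c).1
        = a • (A b.2 + b.1) + a' • (A c.2 + c.1) := by
      simp only [Prod.smul_def, Prod.add_def, map_add, map_smul]
      module
    rw [heq]; exact h2
  -- zero is in Cset
  have hC0 : (0 : Eu m) ∈ Cset := by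
    constructor
    · intro z _; simp
    · simp
  -- (a) interior → Cset = {0}
  have h_a : pb ∈ interior {q : Eu m | ∃ x : Eu n, A x + q ∈ K} → Cset = {0} := by
    intro hint
    obtain ⟨r, hr, hball⟩ := Metric.mem_nhds_iff.mp (mem_interior_iff_mem_nhds.mp hint)
    apply Subset.antisymm
    · rintro y ⟨hy1, hy2⟩
      have key : ∀ u : Eu m, ‖u‖ < r → ⟪y, u⟫ ≤ 0 := by
        intro u hu
        have hmem : pb + u ∈ ball pb r := by
          rw [mem_ball, dist_eq_norm]; simpa using hu
        obtain ⟨x, hx⟩ := hball hmem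
        have h1 := hy1 _ hx
        have hAx : ⟪y, A x - A xb⟫ = 0 := by
          rw [← map_sub, ← ContinuousLinearMap.adjoint_inner_left, hy2, inner_zero_left]
        have heq : A x + (pb + u) - (A xb + pb) = A x - A xb + u := by abel
        rw [heq, inner_add_right, hAx] at h1
        linarith
      simp only [mem_singleton_iff]
      by_contra hy0
      have hyn : 0 < ‖y‖ := norm_pos_iff.mpr hy0
      have hne : ‖y‖ ≠ 0 := ne_of_gt hyn
      have h1 : ‖(r / (2 * ‖y‖)) • y‖ < r := by
        rw [norm_smul, Real.norm_eq_abs, abs_of_pos (by positivity)]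
        have he : r / (2 * ‖y‖) * ‖y‖ = r / 2 := by field_simp
        rw [he]; linarith
      have h2 := key _ h1
      rw [real_inner_smul_right, real_inner_self_eq_norm_mul_norm] at h2
      have hp := mul_pos (div_pos hr (by positivity : (0:ℝ) < 2 * ‖y‖)) (mul_pos hyn hyn)
      linarith
    · rintro y hy
      rw [mem_singleton_iff] at hy
      subst hy; exact hC0
  -- (d) surjectivity → Cset = {0}
  have h_d : (∀ z : Eu m, ∃ w ∈ tangCone K (A xb + pb), ∃ x : Eu n, z = w + A x) →
      Cset = {0} := by
    intro hM
    apply Subset.antisymm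
    · rintro y ⟨hy1, hy2⟩
      obtain ⟨w, hw, x, hx⟩ := hM y
      have hyw : ⟪y, w⟫ ≤ 0 := by
        obtain ⟨t, v, htp, _, hv, hmem⟩ := hw
        refine le_of_tendsto (tendsto_const_nhds.inner hv) (Eventually.of_forall fun k => ?_)
        have h1 := hy1 _ (hmem k)
        rw [add_sub_cancel_left, real_inner_smul_right] at h1
        nlinarith [htp k]
      have hyA : ⟪y, A x⟫ = 0 := by
        rw [← ContinuousLinearMap.adjoint_inner_left, hy2, inner_zero_left]
      have h3 : ⟪y, y⟫ ≤ 0 := by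
        have he : ⟪y, y⟫ = ⟪y, w⟫ + ⟪y, A x⟫ := by rw [← inner_add_right, ← hx]
        rw [he]; linarith
      simpa [mem_singleton_iff] using real_inner_self_nonpos.mp h3
    · rintro y hy
      rw [mem_singleton_iff] at hy
      subst hy; exact hC0
  -- (b) Cset = {0} → surjectivity
  have h_b : Cset = {0} →
      ∀ z : Eu m, ∃ w ∈ tangCone K (A xb + pb), ∃ x : Eu n, z = w + A x := by
    intro hC
    set M : Set (Eu m) := {z | ∃ w ∈ Tl s (A xb + pb), ∃ x : Eu n, z = w + A x} with hMdef
    suffices hMuniv : M = univ by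
      intro z
      have hz : z ∈ M := hMuniv ▸ mem_univ z
      obtain ⟨w, hw, x, hx⟩ := hz
      exact ⟨w, hTl ▸ hw, x, hx⟩
    have hM0 : (0 : Eu m) ∈ M := ⟨0, Tl_zero, 0, by simp⟩
    have hMadd : ∀ a ∈ M, ∀ b ∈ M, a + b ∈ M := by
      rintro a ⟨w1, hw1, x1, rfl⟩ b ⟨w2, hw2, x2, rfl⟩
      exact ⟨w1 + w2, Tl_add hw1 hw2, x1 + x2, by rw [map_add]; abel⟩
    have hMsmul : ∀ (t : ℝ), 0 ≤ t → ∀ a ∈ M, t • a ∈ M := by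
      rintro t ht a ⟨w1, hw1, x1, rfl⟩
      exact ⟨t • w1, Tl_smul ht hw1, t • x1, by rw [map_smul, smul_add]⟩
    have hMconv : Convex ℝ M := fun a ha b hb ta tb hta htb _ =>
      hMadd _ (hMsmul ta hta a ha) _ (hMsmul tb htb b hb)
    have hdense : closure M = univ := by
      by_contra hne
      obtain ⟨v, hv⟩ := (ne_univ_iff_exists_notMem _).mp hne
      obtain ⟨f, u, hfu, huf⟩ :=
        geometric_hahn_banach_closed_point hMconv.closure isClosed_closure hv
      have hu0 : 0 < u := by
        have := hfu 0 (subset_closure hM0); simpa using this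
      have hfle : ∀ a ∈ M, f a ≤ 0 := by
        intro a ha
        by_contra hfa
        push_neg at hfa
        have ht : 0 < 2 * u / f a := by positivity
        have h2 := hfu _ (subset_closure (hMsmul _ ht.le a ha))
        rw [map_smul, smul_eq_mul, div_mul_cancel₀ _ (ne_of_gt hfa)] at h2
        linarith
      set y := (InnerProductSpace.toDual ℝ (Eu m)).symm f with hy
      have hyz : ∀ z' : Eu m, ⟪y, z'⟫ = f z' := fun z' => InnerProductSpace.toDual_symm_apply
      have hyC : y ∈ Cset := by
        constructor
        · intro zz hzz
          rw [hyz]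
          apply hfle
          refine ⟨zz - (A xb + pb), ?_, 0, by simp⟩
          intro p hp heq
          have hzzK : ⟪p.1, zz⟫ ≤ p.2 := by rw [hsK] at hzz; exact hzz p hp
          rw [inner_sub_right, heq]; linarith
        · have hAx : ∀ x : Eu n, f (A x) = 0 := by
            intro x
            have h1 := hfle (A x) ⟨0, Tl_zero, x, by simp⟩
            have h2 := hfle (A (-x)) ⟨0, Tl_zero, -x, by simp⟩
            rw [map_neg, map_neg] at h2
            linarith
          have hinner : ∀ x : Eu n, ⟪ContinuousLinearMap.adjoint A y, x⟫ = 0 := by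
            intro x
            rw [ContinuousLinearMap.adjoint_inner_left, hyz, hAx]
          have := hinner (ContinuousLinearMap.adjoint A y)
          rwa [inner_self_eq_zero] at this
      have hy0 : y = 0 := by
        have := hC ▸ hyC
        rwa [mem_singleton_iff] at this
      have hfv : f v = 0 := by rw [← hyz, hy0, inner_zero_left]
      linarith
    have hspan : affineSpan ℝ M = ⊤ := by
      have hcl : IsClosed (affineSpan ℝ M : Set (Eu m)) :=
        (affineSpan ℝ M).closed_of_finiteDimensional
      have hsub : (univ : Set (Eu m)) ⊆ (affineSpan ℝ M : Set (Eu m)) := by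
        rw [← hdense]; exact closure_minimal (subset_affineSpan ℝ M) hcl
      exact (AffineSubspace.coe_eq_univ_iff _).mp (univ_subset_iff.mp hsub)
    obtain ⟨x₀, hx₀⟩ := hMconv.interior_nonempty_iff_affineSpan_eq_top.mpr hspan
    apply eq_univ_of_forall
    intro zz
    have h2 : (2 : ℝ) • zz - x₀ ∈ closure M := by rw [hdense]; trivial
    have hseg : zz ∈ openSegment ℝ x₀ ((2 : ℝ) • zz - x₀) :=
      ⟨1/2, 1/2, by norm_num, by norm_num, by norm_num, by module⟩
    exact interior_subset (hMconv.openSegment_interior_closure_subset_interior hx₀ h2 hseg)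
  -- (c) surjectivity → interior
  have h_c : (∀ z : Eu m, ∃ w ∈ tangCone K (A xb + pb), ∃ x : Eu n, z = w + A x) →
      pb ∈ interior {q : Eu m | ∃ x : Eu n, A x + q ∈ K} := by
    intro hM
    obtain ⟨δ, hδ, hδK⟩ := Kp_unif s hzK
    simp only [hTl] at hM
    choose w1 hw1 x1 hx1 using fun i : Fin m => hM (EuclideanSpace.single i (1:ℝ))
    choose w2 hw2 x2 hx2 using fun i : Fin m => hM (-EuclideanSpace.single i (1:ℝ))
    set B := (∑ i, (‖w1 i‖ + ‖w2 i‖)) + 1 with hB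
    have hBpos : 0 < B := by positivity
    have hsum : ∀ i, (0:ℝ) ≤ ‖w1 i‖ + ‖w2 i‖ := fun i => by positivity
    apply mem_interior.mpr
    refine ⟨ball pb (δ / B), ?_, isOpen_ball, mem_ball_self (by positivity)⟩
    intro q hq
    set u := q - pb with hu
    have hun : ‖u‖ < δ / B := by
      rw [mem_ball, dist_eq_norm] at hq; exact hq
    set w : Eu m := ∑ i, |u i| • (if 0 ≤ u i then w1 i else w2 i) with hw
    set x : Eu n := ∑ i, |u i| • (if 0 ≤ u i then x1 i else x2 i) with hx
    have hdecomp : u = w + A x := by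
      rw [hw, hx, map_sum, ← Finset.sum_add_distrib]
      have hterm : ∀ i ∈ Finset.univ,
          |u i| • (if 0 ≤ u i then w1 i else w2 i) +
            A (|u i| • (if 0 ≤ u i then x1 i else x2 i))
          = u i • EuclideanSpace.single i (1:ℝ) := by
        intro i _
        rw [map_smul]
        by_cases h : 0 ≤ u i
        · simp only [if_pos h]
          rw [← smul_add, ← hx1 i, abs_of_nonneg h]
        · simp only [if_neg h]
          rw [← smul_add, ← hx2 i, abs_of_neg (lt_of_not_ge h), smul_neg, neg_smul, neg_neg]
      rw [Finset.sum_congr rfl hterm, sum_single_eq]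
    have hwT : w ∈ Tl s (A xb + pb) := by
      rw [hw]
      apply Finset.sum_induction _ (fun a => a ∈ Tl s (A xb + pb))
        (fun a b ha hb => Tl_add ha hb) Tl_zero
      intro i _
      by_cases h : 0 ≤ u i
      · simp only [if_pos h]; exact Tl_smul (abs_nonneg _) (hw1 i)
      · simp only [if_neg h]; exact Tl_smul (abs_nonneg _) (hw2 i)
    have hwn : ‖w‖ ≤ δ := by
      have hstep : ∀ i ∈ Finset.univ,
          ‖|u i| • (if 0 ≤ u i then w1 i else w2 i)‖ ≤ ‖u‖ * (‖w1 i‖ + ‖w2 i‖) := by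
        intro i _
        rw [norm_smul, Real.norm_eq_abs, abs_abs]
        have h1 : |u i| ≤ ‖u‖ := abs_coord_le u i
        have h2 : ‖(if 0 ≤ u i then w1 i else w2 i)‖ ≤ ‖w1 i‖ + ‖w2 i‖ := by
          by_cases h : 0 ≤ u i
          · simp only [if_pos h]; linarith [norm_nonneg (w2 i)]
          · simp only [if_neg h]; linarith [norm_nonneg (w1 i)]
        exact mul_le_mul h1 h2 (norm_nonneg _) (norm_nonneg _)
      calc ‖w‖ ≤ ∑ i, ‖|u i| • (if 0 ≤ u i then w1 i else w2 i)‖ := norm_sum_le _ _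
        _ ≤ ∑ i, ‖u‖ * (‖w1 i‖ + ‖w2 i‖) := Finset.sum_le_sum hstep
        _ = ‖u‖ * ∑ i, (‖w1 i‖ + ‖w2 i‖) := by rw [Finset.mul_sum]
        _ ≤ ‖u‖ * B := by
            apply mul_le_mul_of_nonneg_left _ (norm_nonneg u)
            rw [hB]; linarith
        _ ≤ δ := by
            have := (lt_div_iff₀ hBpos).mp hun
            linarith
    have hK' : A xb + pb + w ∈ Kp s := hδK w hwT hwn
    refine ⟨xb - x, ?_⟩
    show A (xb - x) + q ∈ K
    rw [hsK]
    have hq2 : q = w + A x + pb := by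
      have h3 : q - pb = w + A x := hdecomp
      rw [← h3]; abel
    have heq : A (xb - x) + q = A xb + pb + w := by
      rw [hq2, map_sub]; abel
    rw [heq]; exact hK'
  -- graph normal cone = Cset
  have h_L : {xs : Eu m | (xs, (0 : Eu n)) ∈ limNormalP G (pb, xb)} = Cset := by
    apply Subset.antisymm
    · rintro xs ⟨b, wseq, hbG, hreg, hbt, hwt⟩
      have hb1 : Tendsto (fun k => (b k).1) atTop (𝓝 pb) :=
        ((continuous_fst.tendsto _).comp hbt)
      have hb2 : Tendsto (fun k => (b k).2) atTop (𝓝 xb) :=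
        ((continuous_snd.tendsto _).comp hbt)
      have hw1 : Tendsto (fun k => (wseq k).1) atTop (𝓝 xs) :=
        ((continuous_fst.tendsto _).comp hwt)
      have hw2 : Tendsto (fun k => (wseq k).2) atTop (𝓝 (0 : Eu n)) :=
        ((continuous_snd.tendsto _).comp hwt)
      have hlim : ∀ c ∈ G, ⟪xs, c.1 - pb⟫ ≤ 0 := by
        intro c hc
        have h1 : Tendsto
            (fun k => ⟪(wseq k).1, c.1 - (b k).1⟫ + ⟪(wseq k).2, c.2 - (b k).2⟫) atTop
            (𝓝 (⟪xs, c.1 - pb⟫ + ⟪(0 : Eu n), c.2 - xb⟫)) :=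
          (hw1.inner (tendsto_const_nhds.sub hb1)).add (hw2.inner (tendsto_const_nhds.sub hb2))
        have h2 := le_of_tendsto h1 (Eventually.of_forall fun k =>
          reg_of_convex hGconv (hbG k) (hreg k) hc)
        rwa [inner_zero_left, add_zero] at h2
      have hax : ∀ x' : Eu n, ⟪xs, A x'⟫ = 0 := by
        intro x'
        have hmem1 : (A xb + pb - A (xb + x'), xb + x') ∈ G := by
          rw [hGmem]; show A (xb + x') + (A xb + pb - A (xb + x')) ∈ K
          have : A (xb + x') + (A xb + pb - A (xb + x')) = A xb + pb := by abel
          rw [this]; exact hgr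
        have hmem2 : (A xb + pb - A (xb - x'), xb - x') ∈ G := by
          rw [hGmem]; show A (xb - x') + (A xb + pb - A (xb - x')) ∈ K
          have : A (xb - x') + (A xb + pb - A (xb - x')) = A xb + pb := by abel
          rw [this]; exact hgr
        have h1 := hlim _ hmem1
        have h2 := hlim _ hmem2
        have e1 : A xb + pb - A (xb + x') - pb = -(A x') := by
          rw [map_add]; abel
        have e2 : A xb + pb - A (xb - x') - pb = A x' := by
          rw [map_sub]; abel
        simp only [e1, e2, inner_neg_right] at h1 h2
        linarith
      constructor
      · intro z hz
        have hmem : (z - A xb, xb) ∈ G := by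
          rw [hGmem]; show A xb + (z - A xb) ∈ K
          have : A xb + (z - A xb) = z := by abel
          rw [this]; exact hz
        have h1 := hlim _ hmem
        have e : z - A xb - pb = z - (A xb + pb) := by abel
        rwa [e] at h1
      · have hinner : ∀ x' : Eu n, ⟪ContinuousLinearMap.adjoint A xs, x'⟫ = 0 := by
          intro x'
          rw [ContinuousLinearMap.adjoint_inner_left, hax]
        have := hinner (ContinuousLinearMap.adjoint A xs)
        rwa [inner_self_eq_zero] at this
    · rintro y ⟨hy1, hy2⟩
      refine ⟨fun _ => (pb, xb), fun _ => (y, (0 : Eu n)), fun _ => ⟨trivial, hgr⟩,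
        fun _ => ?_, tendsto_const_nhds, tendsto_const_nhds⟩
      intro ε hε
      refine ⟨1, one_pos, fun c hc _ => ?_⟩
      obtain ⟨-, hc2⟩ := hc
      have hAc : ⟪y, A c.2 - A xb⟫ = 0 := by
        rw [← map_sub, ← ContinuousLinearMap.adjoint_inner_left, hy2, inner_zero_left]
      have h1 := hy1 _ hc2
      have heq : A c.2 + c.1 - (A xb + pb) = A c.2 - A xb + (c.1 - pb) := by abel
      rw [heq, inner_add_right, hAc, zero_add] at h1
      have hfin : ⟪(y, (0:Eu n)).1, c.1 - (pb, xb).1⟫ + ⟪(y, (0:Eu n)).2, c.2 - (pb, xb).2⟫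
          = ⟪y, c.1 - pb⟫ := by simp
      rw [hfin]
      have : (0:ℝ) ≤ ε * ‖c - (pb, xb)‖ := by positivity
      linarith
  -- assemble
  refine ⟨?_, ⟨h_a, fun h => h_c (h_b h)⟩, ⟨h_b, h_d⟩⟩
  constructor
  · intro h
    rw [h_L] at h
    exact h_c (h_b h)
  · intro h
    rw [h_L]
    exact h_a h
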